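/- arXiv:2509.16147 — 3 statements merged into one kernel-verified Lean document; each statement's English description precedes it below -/
import Mathlib

section
/- Let G be a finite group. Then the following are equivalent: (i) for all a, b ∈ G that are not conjugate in G, there is exactly one conjugacy class D of G such that b^G ⊆ a^G · D (where a^G · D = {cd : c ∈ a^G, d ∈ D}); (ii) for all x, y ∈ G with x^G ≠ (y⁻¹)^G, the setwise product x^G · y^G equals (xy)^G. -/
open scoped Classical Pointwise

/-- The conjugacy class of `x` in `G`. -/
def conjClass {G : Type*} [Group G] (x : G) : Set G := {y | ∃ g : G, g * x * g⁻¹ = y}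

/-- The adjacency matrix of a subset `C` of `G`. -/
noncomputable def adjMat (G : Type*) [Group G] (C : Set G) : Matrix G G ℂ :=
  Matrix.of fun x y => if y * x⁻¹ ∈ C then (1 : ℂ) else 0

/-- The dual idempotent of a subset `C` of `G` (base point the identity). -/
noncomputable def dualIdem (G : Type*) [Group G] (C : Set G) : Matrix G G ℂ :=
  Matrix.of fun x y => if x = y ∧ y ∈ C then (1 : ℂ) else 0

/-- The Terwilliger algebra of the group association scheme of `G`, with base point `e`. -/
noncomputable def TerwAlg (G : Type*) [Group G] [Fintype G] [DecidableEq G] : Subalgebra ℂ (Matrix G G ℂ) :=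
  Algebra.adjoin ℂ
    ((Set.range fun x : G => adjMat G (conjClass x)) ∪
     (Set.range fun x : G => dualIdem G (conjClass x)))

/-- A Camina group: a nonabelian group in which every conjugacy class outside the
commutator subgroup is a coset of the commutator subgroup. -/
def IsCamina (G : Type*) [Group G] : Prop :=
  (¬ ∀ a b : G, a * b = b * a) ∧
  ∀ x : G, x ∉ commutator G → conjClass x = x • (commutator G : Set G)

/-- The action of the unit group of a field on (the multiplicative version of) its
additive group, by multiplication. -/
noncomputable def frobAct (F : Type*) [Field F] : Fˣ →* MulAut (Multiplicative F) where
  toFun u := AddEquiv.toMultiplicative (DistribMulAction.toAddAut Fˣ F u)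
  map_one' := by ext x; exact one_smul Fˣ (Multiplicative.toAdd x)
  map_mul' u v := by ext x; exact mul_smul u v (Multiplicative.toAdd x)


/-- The Frobenius group `F ⋊ Fˣ` for `F` the field with `p ^ r` elements. -/
abbrev FrobGrp (p r : ℕ) [Fact p.Prime] : Type :=
  Multiplicative (GaloisField p r) ⋊[frobAct (GaloisField p r)] (GaloisField p r)ˣ

section Aux
variable {G : Type*} [Group G]

lemma mem_conjClass_iff {x y : G} : y ∈ conjClass x ↔ IsConj x y := by
  simp [conjClass, isConj_iff]

lemma self_mem_conjClass (x : G) : x ∈ conjClass x := ⟨1, by simp⟩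

lemma conjClass_eq_of_isConj {x y : G} (h : IsConj x y) : conjClass x = conjClass y := by
  ext z
  simp only [mem_conjClass_iff]
  exact ⟨fun hz => h.symm.trans hz, fun hz => h.trans hz⟩

lemma conjClass_eq_iff {x y : G} : conjClass x = conjClass y ↔ IsConj x y := by
  constructor
  · intro h
    have := self_mem_conjClass y
    rw [← h, mem_conjClass_iff] at this
    exact this
  · exact conjClass_eq_of_isConj

lemma isConj_inv_of_isConj {x y : G} (h : IsConj x y) : IsConj x⁻¹ y⁻¹ := by
  obtain ⟨c, hc⟩ := isConj_iff.mp h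
  exact isConj_iff.mpr ⟨c, by rw [← hc]; group⟩

lemma conjClass_inv_inj {x y : G} (h : conjClass x⁻¹ = conjClass y⁻¹) :
    conjClass x = conjClass y := by
  rw [conjClass_eq_iff] at h ⊢
  simpa using isConj_inv_of_isConj h

lemma mul_mem_conjClass_mul (x y : G) : x * y ∈ conjClass x * conjClass y :=
  Set.mul_mem_mul (self_mem_conjClass x) (self_mem_conjClass y)

lemma conj_mem_conjClass_mul {x y z : G} (g : G)
    (hz : z ∈ conjClass x * conjClass y) :
    g * z * g⁻¹ ∈ conjClass x * conjClass y := by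
  obtain ⟨u, hu, v, hv, rfl⟩ := hz
  obtain ⟨c, rfl⟩ := hu
  obtain ⟨d, rfl⟩ := hv
  exact ⟨g * (c * x * c⁻¹) * g⁻¹, ⟨g * c, by group⟩,
    g * (d * y * d⁻¹) * g⁻¹, ⟨g * d, by group⟩, by group⟩

lemma conjClass_subset_mul {x y z : G} (hz : z ∈ conjClass x * conjClass y) :
    conjClass z ⊆ conjClass x * conjClass y := by
  rintro w ⟨g, rfl⟩
  exact conj_mem_conjClass_mul g hz

lemma inv_mem_conjClass_inv {a a' : G} (h : a' ∈ conjClass a) : a'⁻¹ ∈ conjClass a⁻¹ := by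
  obtain ⟨g, rfl⟩ := h
  exact ⟨g, by group⟩

end Aux

/-- Theorem 2.2 specialized to the Schur ring spanned by the conjugacy classes of `G`:
Tanaka's criterion is equivalent to the conjugacy-product property. -/
theorem stmt1 {G : Type*} [Group G] [Fintype G] :
    (∀ a b : G, b ∉ conjClass a →
      ∃! D : Set G, (∃ c : G, D = conjClass c) ∧ conjClass b ⊆ conjClass a * D) ↔
      (∀ x y : G, conjClass x ≠ conjClass y⁻¹ →
        conjClass x * conjClass y = conjClass (x * y)) := by
  constructor
  · -- (i) → (ii)
    intro h x y hxy
    have hb : y ∉ conjClass x⁻¹ := by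
      intro hy
      apply hxy
      rw [mem_conjClass_iff] at hy
      exact conjClass_eq_of_isConj (by simpa using isConj_inv_of_isConj hy)
    obtain ⟨D, hD, huniq⟩ := h x⁻¹ y hb
    apply Set.Subset.antisymm
    · rintro z hz
      obtain ⟨u, hu, v, hv, rfl⟩ := hz
      have h1 : conjClass y ⊆ conjClass x⁻¹ * conjClass (u * v) := by
        have hvmem : v ∈ conjClass x⁻¹ * conjClass (u * v) :=
          ⟨u⁻¹, inv_mem_conjClass_inv hu, u * v, self_mem_conjClass _, by group⟩
        rw [conjClass_eq_of_isConj (mem_conjClass_iff.mp hv)]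
        exact conjClass_subset_mul hvmem
      have h2 : conjClass y ⊆ conjClass x⁻¹ * conjClass (x * y) := by
        have : y ∈ conjClass x⁻¹ * conjClass (x * y) :=
          ⟨x⁻¹, self_mem_conjClass _, x * y, self_mem_conjClass _, by group⟩
        exact conjClass_subset_mul this
      have e1 := huniq _ ⟨⟨u * v, rfl⟩, h1⟩
      have e2 := huniq _ ⟨⟨x * y, rfl⟩, h2⟩
      have : conjClass (u * v) = conjClass (x * y) := e1.trans e2.symm
      rw [← this]
      exact self_mem_conjClass _
    · exact conjClass_subset_mul (mul_mem_conjClass_mul x y)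
  · -- (ii) → (i)
    intro h a b hb
    have hcond : conjClass a⁻¹ ≠ conjClass b⁻¹ := by
      intro hc
      exact hb (conjClass_inv_inj hc ▸ self_mem_conjClass b)
    have key : conjClass a⁻¹ * conjClass b = conjClass (a⁻¹ * b) := h a⁻¹ b hcond
    refine ⟨conjClass (a⁻¹ * b), ⟨⟨a⁻¹ * b, rfl⟩, ?_⟩, ?_⟩
    · have : b ∈ conjClass a * conjClass (a⁻¹ * b) :=
        ⟨a, self_mem_conjClass _, a⁻¹ * b, self_mem_conjClass _, by group⟩
      exact conjClass_subset_mul this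
    · rintro D ⟨⟨c, rfl⟩, hsub⟩
      have hbmem : b ∈ conjClass a * conjClass c := hsub (self_mem_conjClass b)
      obtain ⟨a', ha', c', hc', hbc⟩ := hbmem
      have : c' ∈ conjClass (a⁻¹ * b) := by
        rw [← key]
        exact ⟨a'⁻¹, inv_mem_conjClass_inv ha', b, self_mem_conjClass b,
          by rw [← hbc]; group⟩
      rw [mem_conjClass_iff] at this hc'
      exact conjClass_eq_of_isConj (hc'.trans this.symm)
end

section
/- Let p be a prime and r ≥ 1 with q = p^r ≥ 3, and let G = F ⋊ Fˣ be the semidirect product of the additive group of F = GaloisField p r by its unit group Fˣ acting by multiplication. Then the dimension over ℂ of the Terwilliger algebra T(G) equals p^{2r} + p^r − 1. -/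
open scoped Classical Pointwise

section General

set_option linter.unusedSectionVars false

variable {G : Type*} [Group G] [Fintype G] [DecidableEq G]

lemma mem_conjClass {w z : G} : z ∈ conjClass w ↔ ConjClasses.mk w = ConjClasses.mk z := by
  rw [ConjClasses.mk_eq_mk_iff_isConj, isConj_iff]; rfl

lemma mk_eq_one_iff {x : G} : ConjClasses.mk x = 1 ↔ x = 1 := by
  rw [ConjClasses.one_eq_mk_one, ConjClasses.mk_eq_mk_iff_isConj, isConj_comm, isConj_one_right]

/-- The cell map: the data (class of x, class of y, whether x = y). -/
def cellMap (p : G × G) : ConjClasses G × ConjClasses G × Bool :=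
  (ConjClasses.mk p.1, ConjClasses.mk p.2, decide (p.1 = p.2))

lemma cellMap_eq_iff {p q : G × G} :
    cellMap p = cellMap q ↔
      (ConjClasses.mk p.1 = ConjClasses.mk q.1 ∧ ConjClasses.mk p.2 = ConjClasses.mk q.2 ∧
        (p.1 = p.2 ↔ q.1 = q.2)) := by
  simp [cellMap, Prod.ext_iff, decide_eq_decide]

lemma swap_conj_mk {a b : G} (h : ConjClasses.mk a = ConjClasses.mk b) (z : G) :
    ConjClasses.mk (Equiv.swap a b z) = ConjClasses.mk z := by
  rcases eq_or_ne z a with rfl | ha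
  · rw [Equiv.swap_apply_left]; exact h.symm
  rcases eq_or_ne z b with rfl | hb
  · rw [Equiv.swap_apply_right]; exact h
  · rw [Equiv.swap_apply_of_ne_of_ne ha hb]

lemma exists_cell_perm {x y x' y' : G} (hx : ConjClasses.mk x = ConjClasses.mk x')
    (hy : ConjClasses.mk y = ConjClasses.mk y') (hd : x = y ↔ x' = y') :
    ∃ σ : Equiv.Perm G, (∀ z, ConjClasses.mk (σ z) = ConjClasses.mk z) ∧ σ x = x' ∧ σ y = y' := by
  by_cases hxy : x = y
  · subst hxy
    have h' : x' = y' := hd.mp rfl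
    subst h'
    exact ⟨Equiv.swap x x', fun z => swap_conj_mk hx z, by simp, by simp⟩
  · have hxy' : x' ≠ y' := fun h => hxy (hd.mpr h)
    have hy0 : ConjClasses.mk (Equiv.swap x x' y) = ConjClasses.mk y' := by
      rw [swap_conj_mk hx]; exact hy
    refine ⟨(Equiv.swap x x').trans (Equiv.swap (Equiv.swap x x' y) y'), ?_, ?_, ?_⟩
    · intro z
      simp only [Equiv.trans_apply]
      rw [swap_conj_mk hy0, swap_conj_mk hx]
    · simp only [Equiv.trans_apply, Equiv.swap_apply_left]
      refine Equiv.swap_apply_of_ne_of_ne ?_ hxy'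
      intro h
      have h2 : Equiv.swap x x' x = Equiv.swap x x' y := by
        rw [Equiv.swap_apply_left]; exact h
      exact hxy ((Equiv.swap x x').injective h2)
    · simp only [Equiv.trans_apply]
      exact Equiv.swap_apply_left _ _

/-- The algebra of matrices whose entries depend only on the cell. -/
noncomputable def cellAlg (G : Type*) [Group G] [Fintype G] [DecidableEq G] :
    Subalgebra ℂ (Matrix G G ℂ) where
  carrier := {M | ∀ p q : G × G, cellMap p = cellMap q → M p.1 p.2 = M q.1 q.2}
  zero_mem' := fun _ _ _ => rfl
  add_mem' := by
    intro M N hM hN p q h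
    simp only [Matrix.add_apply, hM p q h, hN p q h]
  one_mem' := by
    intro p q h
    obtain ⟨-, -, h3⟩ := cellMap_eq_iff.mp h
    simp only [Matrix.one_apply]
    exact if_congr h3 rfl rfl
  mul_mem' := by
    intro M N hM hN p q h
    obtain ⟨h1, h2, h3⟩ := cellMap_eq_iff.mp h
    obtain ⟨σ, hσc, hσx, hσy⟩ := exists_cell_perm h1 h2 h3
    simp only [Matrix.mul_apply]
    refine Fintype.sum_equiv σ _ _ fun z => ?_
    have e1 : M p.1 z = M q.1 (σ z) := by
      refine hM (p.1, z) (q.1, σ z) (cellMap_eq_iff.mpr ⟨h1, (hσc z).symm, ?_⟩)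
      constructor
      · intro hz
        replace hz : p.1 = z := hz
        show q.1 = σ z
        rw [← hz]; exact hσx.symm
      · intro hz
        replace hz : q.1 = σ z := hz
        exact σ.injective (hσx.trans hz)
    have e2 : N z p.2 = N (σ z) q.2 := by
      refine hN (z, p.2) (σ z, q.2) (cellMap_eq_iff.mpr ⟨(hσc z).symm, h2, ?_⟩)
      constructor
      · intro hz
        replace hz : z = p.2 := hz
        show σ z = q.2
        rw [hz]; exact hσy
      · intro hz
        replace hz : σ z = q.2 := hz
        exact σ.injective (hz.trans hσy.symm)
    rw [e1, e2]
  algebraMap_mem' := by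
    intro r p q h
    obtain ⟨-, -, h3⟩ := cellMap_eq_iff.mp h
    simp only [Matrix.algebraMap_matrix_apply]
    exact if_congr h3 rfl rfl

lemma mem_cellAlg {M : Matrix G G ℂ} :
    M ∈ cellAlg G ↔ ∀ x y x' y' : G, ConjClasses.mk x = ConjClasses.mk x' →
      ConjClasses.mk y = ConjClasses.mk y' → (x = y ↔ x' = y') → M x y = M x' y' := by
  constructor
  · intro h x y x' y' h1 h2 h3
    exact h (x, y) (x', y') (cellMap_eq_iff.mpr ⟨h1, h2, h3⟩)
  · intro h p q hpq
    obtain ⟨h1, h2, h3⟩ := cellMap_eq_iff.mp hpq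
    exact h _ _ _ _ h1 h2 h3

end General

section General2

set_option linter.unusedSectionVars false

variable {G : Type*} [Group G] [Fintype G] [DecidableEq G]

/-- A representative of a conjugacy class. -/
noncomputable def crep (c : ConjClasses G) : G := (ConjClasses.exists_rep c).choose

lemma crep_spec (c : ConjClasses G) : ConjClasses.mk (crep c) = c :=
  (ConjClasses.exists_rep c).choose_spec

lemma terw_le_cell
    (hP : ∀ x y x' y' : G, ConjClasses.mk x = ConjClasses.mk x' →
      ConjClasses.mk y = ConjClasses.mk y' → (x = y ↔ x' = y') →
      ConjClasses.mk (y * x⁻¹) = ConjClasses.mk (y' * x'⁻¹)) :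
    TerwAlg G ≤ cellAlg G := by
  rw [TerwAlg]
  apply Algebra.adjoin_le
  rintro M (⟨x0, rfl⟩ | ⟨x0, rfl⟩) <;> rw [SetLike.mem_coe, mem_cellAlg] <;>
    intro x y x' y' h1 h2 h3
  · have hq := hP x y x' y' h1 h2 h3
    have hiff : (y * x⁻¹ ∈ conjClass x0) ↔ (y' * x'⁻¹ ∈ conjClass x0) := by
      rw [mem_conjClass, mem_conjClass, hq]
    simp only [adjMat, Matrix.of_apply, hiff]
  · have hiff : (x = y ∧ y ∈ conjClass x0) ↔ (x' = y' ∧ y' ∈ conjClass x0) := by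
      refine and_congr h3 ?_
      rw [mem_conjClass, mem_conjClass, h2]
    simp only [dualIdem, Matrix.of_apply, hiff]
    congr!

/-- The all-ones matrix. -/
noncomputable def Jmat (G : Type*) : Matrix G G ℂ := Matrix.of fun _ _ => 1

lemma Jmat_mem : Jmat G ∈ TerwAlg G := by
  have hJ : Jmat G = ∑ c : ConjClasses G, adjMat G (conjClass (crep c)) := by
    ext x y
    rw [Matrix.sum_apply]
    have : ∀ c : ConjClasses G, adjMat G (conjClass (crep c)) x y =
        if c = ConjClasses.mk (y * x⁻¹) then 1 else 0 := by
      intro c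
      simp only [adjMat, Matrix.of_apply]
      refine if_congr ?_ rfl rfl
      rw [mem_conjClass, crep_spec]
    simp only [this, Jmat, Matrix.of_apply, Finset.sum_ite_eq', Finset.sum_ite_eq, Finset.mem_univ, if_true]
  rw [hJ]
  refine Subalgebra.sum_mem _ fun c _ => ?_
  exact Algebra.subset_adjoin (Or.inl ⟨crep c, rfl⟩)

lemma dualIdem_mem (c : ConjClasses G) : dualIdem G (conjClass (crep c)) ∈ TerwAlg G :=
  Algebra.subset_adjoin (Or.inr ⟨crep c, rfl⟩)

lemma mem_conjClass_crep {E : ConjClasses G} {z : G} :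
    z ∈ conjClass (crep E) ↔ ConjClasses.mk z = E := by
  rw [mem_conjClass, crep_spec]; exact eq_comm

lemma dualIdem_eq_diagonal (S : Set G) :
    dualIdem G S = Matrix.diagonal (fun x => if x ∈ S then (1:ℂ) else 0) := by
  ext x y
  simp only [dualIdem, Matrix.of_apply, Matrix.diagonal_apply]
  by_cases h1 : x = y
  · subst h1; by_cases h2 : x ∈ S <;> simp [h2]
  · simp [h1]

lemma dualIdem_mul_dualIdem (S T : Set G) :
    dualIdem G S * dualIdem G T = Matrix.of fun x y => if x = y ∧ x ∈ S ∧ y ∈ T then 1 else 0 := by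
  rw [dualIdem_eq_diagonal, dualIdem_eq_diagonal, Matrix.diagonal_mul_diagonal]
  ext x y
  simp only [Matrix.diagonal_apply, Matrix.of_apply, Pi.mul_apply]
  by_cases h1 : x = y
  · subst h1
    by_cases h2 : x ∈ S <;> by_cases h3 : x ∈ T <;> simp [h2, h3]
  · simp [h1]

lemma dualIdem_mul_J_mul_dualIdem (S T : Set G) :
    dualIdem G S * Jmat G * dualIdem G T =
      Matrix.of fun x y => if x ∈ S ∧ y ∈ T then 1 else 0 := by
  rw [dualIdem_eq_diagonal, dualIdem_eq_diagonal]
  ext x y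
  rw [Matrix.mul_diagonal, Matrix.diagonal_mul]
  simp only [Jmat, Matrix.of_apply, mul_one]
  by_cases h1 : x ∈ S <;> by_cases h2 : y ∈ T <;> simp [h1, h2]

/-- The indicator matrix of a cell. -/
noncomputable def indMat (c : ConjClasses G × ConjClasses G × Bool) : Matrix G G ℂ :=
  Matrix.of fun x y => if cellMap (x, y) = c then 1 else 0

lemma cellMap_eq_triple {x y : G} {C D : ConjClasses G} {b : Bool} :
    cellMap (x, y) = (C, D, b) ↔
      (ConjClasses.mk x = C ∧ ConjClasses.mk y = D ∧ (x = y ↔ b = true)) := by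
  cases b <;>
    simp [cellMap, Prod.ext_iff, decide_eq_true_eq, decide_eq_false_iff_not, and_assoc]

lemma indMat_mem (c : ConjClasses G × ConjClasses G × Bool) : indMat c ∈ TerwAlg G := by
  obtain ⟨C, D, b⟩ := c
  cases b
  · -- off-diagonal cell: E_C J E_D - E_C E_D
    have he : indMat (C, D, false) =
        dualIdem G (conjClass (crep C)) * Jmat G * dualIdem G (conjClass (crep D)) -
        dualIdem G (conjClass (crep C)) * dualIdem G (conjClass (crep D)) := by
      rw [dualIdem_mul_J_mul_dualIdem, dualIdem_mul_dualIdem]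
      ext x y
      simp only [indMat, Matrix.sub_apply, Matrix.of_apply, cellMap_eq_triple,
        mem_conjClass_crep]
      by_cases h1 : ConjClasses.mk x = C <;> by_cases h2 : ConjClasses.mk y = D <;>
        by_cases h3 : x = y <;> simp [h1, h2, h3]
    rw [he]
    exact sub_mem (Subalgebra.mul_mem _ (Subalgebra.mul_mem _ (dualIdem_mem C) Jmat_mem)
      (dualIdem_mem D)) (Subalgebra.mul_mem _ (dualIdem_mem C) (dualIdem_mem D))
  · have he : indMat (C, D, true) =
        dualIdem G (conjClass (crep C)) * dualIdem G (conjClass (crep D)) := by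
      rw [dualIdem_mul_dualIdem]
      ext x y
      simp only [indMat, Matrix.of_apply, cellMap_eq_triple, mem_conjClass_crep]
      by_cases h1 : ConjClasses.mk x = C <;> by_cases h2 : ConjClasses.mk y = D <;>
        by_cases h3 : x = y <;> simp [h1, h2, h3]
    rw [he]
    exact Subalgebra.mul_mem _ (dualIdem_mem C) (dualIdem_mem D)

lemma cell_le_terw : cellAlg G ≤ TerwAlg G := by
  intro M hM
  have hrep : M = ∑ c : ConjClasses G × ConjClasses G × Bool,
      (if h : ∃ p : G × G, cellMap p = c then M h.choose.1 h.choose.2 else 0) • indMat c := by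
    ext x y
    rw [Matrix.sum_apply]
    have : ∀ c, ((if h : ∃ p : G × G, cellMap p = c then M h.choose.1 h.choose.2 else 0) •
        indMat c) x y =
        if cellMap (x, y) = c then
          (if h : ∃ p : G × G, cellMap p = c then M h.choose.1 h.choose.2 else 0) else 0 := by
      intro c
      simp only [Matrix.smul_apply, indMat, Matrix.of_apply, smul_eq_mul, mul_ite, mul_one,
        mul_zero]
    simp only [this, Finset.sum_ite_eq, Finset.sum_ite_eq', Finset.mem_univ, if_true]
    rw [dif_pos (⟨(x, y), rfl⟩ : ∃ p : G × G, cellMap p = cellMap (x, y))]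
    exact (hM _ (x, y) (Exists.choose_spec (⟨(x, y), rfl⟩ : ∃ p : G × G, cellMap p = cellMap (x, y)))).symm
  rw [hrep]
  exact Subalgebra.sum_mem _ fun c _ => Subalgebra.smul_mem _ (indMat_mem c) _

end General2

section Finrank

set_option linter.unusedSectionVars false

variable {G : Type*} [Group G] [Fintype G] [DecidableEq G]

/-- Linear equivalence between the cell algebra and functions on nonempty cells. -/
noncomputable def cellEquivFun :
    cellAlg G ≃ₗ[ℂ]
      ({c : ConjClasses G × ConjClasses G × Bool // ∃ p : G × G, cellMap p = c} → ℂ) where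
  toFun M c := (M : Matrix G G ℂ) c.2.choose.1 c.2.choose.2
  map_add' M N := rfl
  map_smul' r M := rfl
  invFun f := ⟨Matrix.of fun x y => f ⟨cellMap (x, y), ⟨(x, y), rfl⟩⟩, by
    intro p q h
    simp only [Matrix.of_apply]
    exact congrArg f (Subtype.ext h)⟩
  left_inv M := by
    apply Subtype.ext
    ext x y
    have hw : ∃ p : G × G, cellMap p = cellMap (x, y) := ⟨(x, y), rfl⟩
    exact M.2 hw.choose (x, y) hw.choose_spec
  right_inv f := by
    funext c
    exact congrArg f (Subtype.ext c.2.choose_spec)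

lemma finrank_cellAlg :
    Module.finrank ℂ (cellAlg G) =
      Fintype.card {c : ConjClasses G × ConjClasses G × Bool // ∃ p : G × G, cellMap p = c} := by
  rw [LinearEquiv.finrank_eq (cellEquivFun (G := G))]
  exact Module.finrank_fintype_fun_eq_card ℂ

lemma cell_nonempty_iff
    (hZ : ∀ x : G, x ≠ 1 → ∃ y, IsConj x y ∧ y ≠ x) (C D : ConjClasses G) (b : Bool) :
    (∃ p : G × G, cellMap p = (C, D, b)) ↔
      (if b then C = D else ¬(C = 1 ∧ D = 1)) := by
  constructor
  · rintro ⟨⟨x, y⟩, hp⟩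
    rw [cellMap_eq_triple] at hp
    obtain ⟨h1, h2, h3⟩ := hp
    cases b
    · simp only [if_false, Bool.false_eq_true, iff_false] at h3 ⊢
      rintro ⟨hC1, hD1⟩
      apply h3
      rw [mk_eq_one_iff.mp (h1.trans hC1), mk_eq_one_iff.mp (h2.trans hD1)]
    · simp only [if_true] at *
      rw [← h1, ← h2, h3.mpr trivial]
  · intro h
    cases b
    · simp only [if_false, Bool.false_eq_true, iff_false] at h
      by_cases hCD : C = D
      · subst hCD
        have hC1 : C ≠ 1 := fun h1 => h ⟨h1, h1⟩
        have hx1 : crep C ≠ 1 := fun he => hC1 (by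
          rw [← crep_spec C, he]
          exact mk_eq_one_iff.mpr rfl)
        obtain ⟨y, hc, hne⟩ := hZ (crep C) hx1
        refine ⟨(crep C, y), ?_⟩
        rw [cellMap_eq_triple]
        refine ⟨crep_spec C, ?_, ?_⟩
        · rw [← ConjClasses.mk_eq_mk_iff_isConj.mpr hc, crep_spec]
        · simp only [Bool.false_eq_true, iff_false]
          exact fun hxy => hne hxy.symm
      · refine ⟨(crep C, crep D), ?_⟩
        rw [cellMap_eq_triple]
        refine ⟨crep_spec C, crep_spec D, ?_⟩
        simp only [Bool.false_eq_true, iff_false]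
        intro hxy
        exact hCD (by rw [← crep_spec C, hxy, crep_spec D])
    · simp only [if_true] at h
      subst h
      exact ⟨(crep C, crep C), by rw [cellMap_eq_triple]; exact ⟨crep_spec C, crep_spec C, by simp⟩⟩

lemma card_cells (hZ : ∀ x : G, x ≠ 1 → ∃ y, IsConj x y ∧ y ≠ x) :
    Fintype.card {c : ConjClasses G × ConjClasses G × Bool // ∃ p : G × G, cellMap p = c} =
      Fintype.card (ConjClasses G) * Fintype.card (ConjClasses G) +
        Fintype.card (ConjClasses G) - 1 := by
  classical
  set q := Fintype.card (ConjClasses G) with hq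
  rw [Fintype.card_subtype]
  have hfc : (Finset.univ.filter
        (fun c : ConjClasses G × ConjClasses G × Bool => ∃ p : G × G, cellMap p = c)) =
      (Finset.univ.filter
        (fun c : ConjClasses G × ConjClasses G × Bool =>
          if c.2.2 then c.1 = c.2.1 else ¬(c.1 = 1 ∧ c.2.1 = 1))) := by
    apply Finset.filter_congr
    intro c _
    obtain ⟨C, D, b⟩ := c
    exact cell_nonempty_iff hZ C D b
  rw [hfc, Finset.card_filter]
  rw [Fintype.sum_prod_type]
  have hin : ∀ C : ConjClasses G,
      (∑ db : ConjClasses G × Bool,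
        if (if db.2 then C = db.1 else ¬(C = 1 ∧ db.1 = 1)) then (1:ℕ) else 0) =
      (∑ D : ConjClasses G,
        ((if C = D then (1:ℕ) else 0) + (if ¬(C = 1 ∧ D = 1) then (1:ℕ) else 0))) := by
    intro C
    rw [Fintype.sum_prod_type]
    refine Finset.sum_congr rfl fun D _ => ?_
    rw [Fintype.sum_bool]
    simp
  simp only [hin]
  simp only [Finset.sum_add_distrib]
  have e1 : (∑ C : ConjClasses G, ∑ D : ConjClasses G, if C = D then (1:ℕ) else 0) = q := by
    simp [Finset.sum_ite_eq, hq]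
  have e2 : (∑ C : ConjClasses G, ∑ D : ConjClasses G,
      if ¬(C = 1 ∧ D = 1) then (1:ℕ) else 0) = q * q - 1 := by
    rw [← Finset.sum_product', Finset.univ_product_univ, ← Finset.card_filter,
      Finset.filter_not, Finset.card_sdiff_of_subset (Finset.filter_subset _ _)]
    have hsing : (Finset.univ.filter
        (fun p : ConjClasses G × ConjClasses G => p.1 = 1 ∧ p.2 = 1)) =
        {((1 : ConjClasses G), (1 : ConjClasses G))} := by
      ext p
      simp [Prod.ext_iff]
    rw [hsing, Finset.card_singleton, Finset.card_univ, Fintype.card_prod]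
  rw [e1, e2]
  have hq1 : 1 ≤ q := Fintype.card_pos
  have hqq : 1 ≤ q * q := by
    calc 1 = 1 * 1 := by ring
    _ ≤ q * q := Nat.mul_le_mul hq1 hq1
  rw [Nat.add_comm q (q * q - 1)]
  exact (Nat.sub_add_comm hqq).symm

end Finrank

section Frob

variable {K : Type*} [Field K]

lemma frobAct_apply (u : Kˣ) (m : Multiplicative K) :
    frobAct K u m = Multiplicative.ofAdd ((u : K) * Multiplicative.toAdd m) := rfl

abbrev Gk (K : Type*) [Field K] := Multiplicative K ⋊[frobAct K] Kˣ

/-- additive part of an element. -/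
abbrev Av (x : Gk K) : K := Multiplicative.toAdd x.left

lemma conj_right (g x : Gk K) : (g * x * g⁻¹).right = x.right := by
  simp only [SemidirectProduct.mul_right, SemidirectProduct.inv_right]
  rw [mul_comm g.right x.right, mul_inv_cancel_right]

lemma conj_left (g x : Gk K) :
    Av (g * x * g⁻¹) = (g.right : K) * Av x + (1 - (x.right : K)) * Av g := by
  have hw : (g.right : K) ≠ 0 := Units.ne_zero _
  simp only [Av, SemidirectProduct.mul_left, SemidirectProduct.inv_left,
    SemidirectProduct.mul_right, SemidirectProduct.inv_right, frobAct_apply, toAdd_mul,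
    toAdd_ofAdd, toAdd_inv, Units.val_mul, Units.val_inv_eq_inv_val]
  field_simp
  ring

lemma quot_right (x y : Gk K) : (y * x⁻¹).right = y.right * x.right⁻¹ := by
  simp [SemidirectProduct.mul_right, SemidirectProduct.inv_right]

lemma quot_left (x y : Gk K) :
    Av (y * x⁻¹) = Av y - ((y.right : K) * (x.right : K)⁻¹) * Av x := by
  simp only [Av, SemidirectProduct.mul_left, SemidirectProduct.inv_left,
    SemidirectProduct.inv_right, frobAct_apply, toAdd_mul, toAdd_ofAdd, toAdd_inv,
    Units.val_inv_eq_inv_val]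
  ring

lemma eq_iff_frob {x y : Gk K} : x = y ↔ (Av x = Av y ∧ x.right = y.right) := by
  rw [SemidirectProduct.ext_iff]
  exact and_congr ⟨fun h => by rw [Av, Av, h], fun h => by
    have := congrArg Multiplicative.ofAdd h
    simpa using this⟩ Iff.rfl

lemma isConj_iff_frob {x y : Gk K} :
    IsConj x y ↔ (x.right = y.right ∧ ((x.right : K) ≠ 1 ∨ (Av x = 0 ↔ Av y = 0))) := by
  constructor
  · intro h
    obtain ⟨g, hg⟩ := isConj_iff.mp h
    have hr : x.right = y.right := by rw [← hg, conj_right]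
    refine ⟨hr, ?_⟩
    by_cases hu : (x.right : K) ≠ 1
    · exact Or.inl hu
    · push_neg at hu
      right
      have hL : Av y = (g.right : K) * Av x + (1 - (x.right : K)) * Av g := by
        rw [← hg, conj_left]
      rw [hL, hu, sub_self, zero_mul, add_zero]
      have hw : (g.right : K) ≠ 0 := Units.ne_zero _
      constructor
      · intro h0; rw [h0, mul_zero]
      · intro h0; exact (mul_eq_zero.mp h0).resolve_left hw
  · rintro ⟨hr, hu | hz⟩
    · have h1u : (1 : K) - (x.right : K) ≠ 0 := sub_ne_zero.mpr (Ne.symm hu)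
      refine isConj_iff.mpr ⟨⟨Multiplicative.ofAdd ((Av y - Av x) / (1 - (x.right : K))), 1⟩, ?_⟩
      rw [eq_iff_frob]
      refine ⟨?_, by rw [conj_right]; exact hr.symm ▸ rfl⟩
      rw [conj_left]
      show (((1 : Kˣ) : K)) * Av x + (1 - (x.right : K)) *
        Multiplicative.toAdd (Multiplicative.ofAdd ((Av y - Av x) / (1 - (x.right : K)))) = Av y
      rw [Units.val_one, one_mul, toAdd_ofAdd]
      field_simp
      ring
    · by_cases hx0 : Av x = 0
      · have hy0 : Av y = 0 := hz.mp hx0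
        have hxy : x = y := eq_iff_frob.mpr ⟨by rw [hx0, hy0], hr⟩
        exact hxy ▸ IsConj.refl x
      · have hy0 : Av y ≠ 0 := fun h => hx0 (hz.mpr h)
        refine isConj_iff.mpr ⟨⟨1, Units.mk0 (Av y / Av x) (div_ne_zero hy0 hx0)⟩, ?_⟩
        rw [eq_iff_frob]
        refine ⟨?_, by rw [conj_right]; exact hr⟩
        rw [conj_left]
        show (Av y / Av x) * Av x + (1 - (x.right : K)) * Multiplicative.toAdd
          (1 : Multiplicative K) = Av y
        rw [toAdd_one, mul_zero, add_zero]
        field_simp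

end Frob

section FrobMain

variable (p r : ℕ) [Fact p.Prime]

lemma frob_key (a b : FrobGrp p r) (hba : b.right = a.right) :
    (Av (b * a⁻¹) = 0 ↔ a = b) := by
  rw [quot_left]
  have h1 : ((b.right : GaloisField p r) * ((a.right : GaloisField p r))⁻¹) = 1 := by
    rw [hba]
    exact mul_inv_cancel₀ (Units.ne_zero _)
  rw [h1, one_mul, sub_eq_zero, eq_iff_frob]
  constructor
  · intro h; exact ⟨h.symm, hba.symm⟩
  · rintro ⟨h, -⟩; exact h.symm

lemma frob_P {x y x' y' : FrobGrp p r}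
    (h1 : ConjClasses.mk x = ConjClasses.mk x') (h2 : ConjClasses.mk y = ConjClasses.mk y')
    (h3 : x = y ↔ x' = y') :
    ConjClasses.mk (y * x⁻¹) = ConjClasses.mk (y' * x'⁻¹) := by
  rw [ConjClasses.mk_eq_mk_iff_isConj] at h1 h2 ⊢
  obtain ⟨hru, -⟩ := isConj_iff_frob.mp h1
  obtain ⟨hrv, -⟩ := isConj_iff_frob.mp h2
  have hqr : (y * x⁻¹).right = (y' * x'⁻¹).right := by
    rw [quot_right, quot_right, hru, hrv]
  rw [isConj_iff_frob]
  refine ⟨hqr, ?_⟩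
  by_cases hvu : (((y * x⁻¹ : FrobGrp p r).right : GaloisField p r)) ≠ 1
  · exact Or.inl hvu
  push_neg at hvu
  right
  have hyx : y.right = x.right := by
    have hh : (y * x⁻¹ : FrobGrp p r).right = 1 := Units.val_eq_one.mp hvu
    rw [quot_right] at hh
    exact mul_inv_eq_one.mp hh
  have hyx' : y'.right = x'.right := by rw [← hru, ← hrv]; exact hyx
  rw [frob_key p r x y hyx, frob_key p r x' y' hyx']
  exact h3

lemma Av_mk (t : GaloisField p r) (u : (GaloisField p r)ˣ) :
    Av (⟨Multiplicative.ofAdd t, u⟩ : FrobGrp p r) = t := rfl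

lemma right_mk (t : GaloisField p r) (u : (GaloisField p r)ˣ) :
    (⟨Multiplicative.ofAdd t, u⟩ : FrobGrp p r).right = u := rfl

lemma Av_one : Av (1 : FrobGrp p r) = 0 := rfl

lemma frob_Z (hr1 : 1 ≤ r) (hq : 3 ≤ p ^ r) :
    ∀ x : FrobGrp p r, x ≠ 1 → ∃ y, IsConj x y ∧ y ≠ x := by
  haveI : Fintype (GaloisField p r) := Fintype.ofFinite _
  haveI : DecidableEq (GaloisField p r) := Classical.decEq _
  intro x hx1
  by_cases hu : ((x.right : GaloisField p r)) = 1
  · have hxr : x.right = 1 := Units.val_eq_one.mp hu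
    have hxa : Av x ≠ 0 := by
      intro h0
      exact hx1 (eq_iff_frob.mpr ⟨by rw [h0, Av_one], by rw [hxr, SemidirectProduct.one_right]⟩)
    have hcard : 1 < Fintype.card (GaloisField p r)ˣ := by
      rw [Fintype.card_units]
      have hcF : Fintype.card (GaloisField p r) = p ^ r := by
        rw [← Nat.card_eq_fintype_card]
        exact GaloisField.card p r (by omega)
      omega
    haveI : Nontrivial (GaloisField p r)ˣ := Fintype.one_lt_card_iff_nontrivial.mp hcard
    obtain ⟨w, hw⟩ := exists_ne (1 : (GaloisField p r)ˣ)
    have hwF : (w : GaloisField p r) ≠ 1 := fun h => hw (Units.val_eq_one.mp h)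
    refine ⟨⟨Multiplicative.ofAdd ((w : GaloisField p r) * Av x), x.right⟩, ?_, ?_⟩
    · refine isConj_iff_frob.mpr ⟨(right_mk p r _ _).symm, Or.inr ?_⟩
      rw [Av_mk]
      constructor
      · intro h0; rw [h0, mul_zero]
      · intro h0; exact absurd ((mul_eq_zero.mp h0).resolve_left (Units.ne_zero w)) hxa
    · intro heq
      have := (eq_iff_frob.mp heq).1
      rw [Av_mk] at this
      have h2 : ((w : GaloisField p r) - 1) * Av x = 0 := by rw [sub_mul, one_mul, this, sub_self]
      rcases mul_eq_zero.mp h2 with h3 | h3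
      · exact hwF (sub_eq_zero.mp h3)
      · exact hxa h3
  · refine ⟨⟨Multiplicative.ofAdd (Av x + (1 - (x.right : GaloisField p r))), x.right⟩, ?_, ?_⟩
    · exact isConj_iff_frob.mpr ⟨(right_mk p r _ _).symm, Or.inl hu⟩
    · intro heq
      have := (eq_iff_frob.mp heq).1
      rw [Av_mk] at this
      have h2 : (1 : GaloisField p r) - (x.right : GaloisField p r) = 0 :=
        add_eq_left.mp this
      exact hu (sub_eq_zero.mp h2).symm

noncomputable def classInv : FrobGrp p r → GaloisField p r := fun x =>
  if ((x.right : GaloisField p r)) = 1 then (if Av x = 0 then 1 else 0)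
  else (x.right : GaloisField p r)

lemma classInv_isConj {x y : FrobGrp p r} (h : IsConj x y) : classInv p r x = classInv p r y := by
  obtain ⟨hr, ho⟩ := isConj_iff_frob.mp h
  by_cases hu : ((x.right : GaloisField p r)) = 1
  · have hv : ((y.right : GaloisField p r)) = 1 := by rw [← hr]; exact hu
    rcases ho with hne | hz
    · exact absurd hu hne
    · simp only [classInv, if_pos hu, if_pos hv]
      by_cases h0 : Av x = 0
      · rw [if_pos h0, if_pos (hz.mp h0)]
      · rw [if_neg h0, if_neg (fun hh => h0 (hz.mpr hh))]
  · have hv : ¬ ((y.right : GaloisField p r)) = 1 := by rw [← hr]; exact hu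
    simp only [classInv, if_neg hu, if_neg hv, hr]

lemma card_conjClasses_frob [Fintype (FrobGrp p r)] [DecidableEq (FrobGrp p r)]
    (hr1 : 1 ≤ r) : Fintype.card (ConjClasses (FrobGrp p r)) = p ^ r := by
  haveI : Fintype (GaloisField p r) := Fintype.ofFinite _
  have hlift : ∀ a b : FrobGrp p r, IsConj a b → classInv p r a = classInv p r b :=
    fun a b h => classInv_isConj p r h
  let L : ConjClasses (FrobGrp p r) → GaloisField p r := Quotient.lift (classInv p r) hlift
  have hLmk : ∀ a : FrobGrp p r, L (ConjClasses.mk a) = classInv p r a := fun a => rfl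
  have hbij : Function.Bijective L := by
    constructor
    · intro c d h
      obtain ⟨a, rfl⟩ := ConjClasses.mk_surjective c
      obtain ⟨b, rfl⟩ := ConjClasses.mk_surjective d
      rw [hLmk, hLmk] at h
      rw [ConjClasses.mk_eq_mk_iff_isConj]
      rw [isConj_iff_frob]
      by_cases hu : ((a.right : GaloisField p r)) = 1 <;>
        by_cases hv : ((b.right : GaloisField p r)) = 1
      · refine ⟨Units.ext (by rw [hu, hv]), Or.inr ?_⟩
        simp only [classInv, if_pos hu, if_pos hv] at h
        by_cases h0 : Av a = 0 <;> by_cases h1 : Av b = 0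
        · exact ⟨fun _ => h1, fun _ => h0⟩
        · rw [if_pos h0, if_neg h1] at h; exact absurd h one_ne_zero
        · rw [if_neg h0, if_pos h1] at h; exact absurd h.symm one_ne_zero
        · exact ⟨fun hh => absurd hh h0, fun hh => absurd hh h1⟩
      · simp only [classInv, if_pos hu, if_neg hv] at h
        by_cases h0 : Av a = 0
        · rw [if_pos h0] at h; exact absurd h.symm hv
        · rw [if_neg h0] at h; exact absurd h.symm (Units.ne_zero b.right)
      · simp only [classInv, if_neg hu, if_pos hv] at h
        by_cases h1 : Av b = 0
        · rw [if_pos h1] at h; exact absurd h hu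
        · rw [if_neg h1] at h; exact absurd h (Units.ne_zero a.right)
      · simp only [classInv, if_neg hu, if_neg hv] at h
        exact ⟨Units.ext h, Or.inl hu⟩
    · intro t
      by_cases ht1 : t = 1
      · refine ⟨ConjClasses.mk 1, ?_⟩
        rw [hLmk]
        simp only [classInv, SemidirectProduct.one_right, Units.val_one, if_pos rfl, Av_one,
          if_pos rfl]
        exact ht1.symm
      · by_cases ht0 : t = 0
        · refine ⟨ConjClasses.mk ⟨Multiplicative.ofAdd 1, 1⟩, ?_⟩
          rw [hLmk]
          simp only [classInv, right_mk, Units.val_one, if_pos rfl, Av_mk]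
          rw [if_neg one_ne_zero]
          exact ht0.symm
        · refine ⟨ConjClasses.mk ⟨1, Units.mk0 t ht0⟩, ?_⟩
          rw [hLmk]
          simp only [classInv, right_mk, Units.val_mk0]
          exact if_neg ht1
      -- done
  rw [Fintype.card_congr (Equiv.ofBijective L hbij), ← Nat.card_eq_fintype_card]
  exact GaloisField.card p r (by omega)

end FrobMain

/-- Theorem 4.4: the dimension of the Terwilliger algebra of the Frobenius group
`ℤ_p^r ⋊ ℤ_{p^r-1}` is `p^{2r} + p^r - 1`. -/
theorem stmt5 (p r : ℕ) [Fact p.Prime] (hr : 1 ≤ r) (hq : 3 ≤ p ^ r)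
    [Fintype (FrobGrp p r)] [DecidableEq (FrobGrp p r)] :
    Module.finrank ℂ (TerwAlg (FrobGrp p r)) = p ^ (2 * r) + p ^ r - 1 := by
  have hTC : TerwAlg (FrobGrp p r) = cellAlg (FrobGrp p r) :=
    le_antisymm (terw_le_cell (fun x y x' y' h1 h2 h3 => frob_P p r h1 h2 h3)) cell_le_terw
  rw [hTC, finrank_cellAlg, card_cells (frob_Z p r hr hq), card_conjClasses_frob p r hr,
    two_mul, pow_add]
end

section
/- Let p be a prime and let G be a Camina group that is a p-group of order p^n with nilpotency class 2 and center Z(G) of order p^k. Then there exists a bijection σ : (G ⧸ Z(G)) × Z(G) ≃ G such that, reindexing each adjacency matrix A_C ∈ Matrix G G ℂ of the group association scheme by σ: (i) for every g ∈ Z(G), the reindexed adjacency matrix of the (singleton) conjugacy class {g} equals the Kronecker product I ⊗ B_g, where I is the p^{n−k} × p^{n−k} identity matrix and B_g ∈ Matrix Z(G) Z(G) ℂ is defined by (B_g)_{u,v} = 1 if v·u⁻¹ = g and 0 otherwise; and (ii) for every g ∈ G with g ∉ Z(G), the reindexed adjacency matrix of the conjugacy class g^G equals the Kronecker product D_g ⊗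 J, where J is the all-ones p^k × p^k matrix and D_g ∈ Matrix (G ⧸ Z(G)) (G ⧸ Z(G)) ℂ is defined by (D_g)_{s,t} = 1 if t·s⁻¹ equals the coset gZ(G) and 0 otherwise. -/
open scoped Classical Pointwise

open Kronecker

section Aux

open scoped commutatorElement

variable {G : Type*} [Group G]

lemma conjClass_central {g : G} (hg : g ∈ Subgroup.center G) : conjClass g = {g} := by
  ext y
  constructor
  · rintro ⟨h, rfl⟩
    rw [Set.mem_singleton_iff, Subgroup.mem_center_iff.mp hg h]
    group
  · rintro rfl
    exact ⟨1, by simp⟩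

lemma center_eq_commutator (hcam : IsCamina G)
    (hnil : (⊤ : Subgroup G).lowerCentralSeries 2 = ⊥) : commutator G = Subgroup.center G := by
  apply le_antisymm
  · intro x hx
    rw [Subgroup.mem_center_iff]
    intro h
    have hx1 : x ∈ (⊤ : Subgroup G).lowerCentralSeries 1 := by rwa [Subgroup.top_lowerCentralSeries_one]
    have hmem : ⁅x, h⁆ ∈ (⊤ : Subgroup G).lowerCentralSeries 2 := by
      rw [show (2 : ℕ) = 1 + 1 from rfl, Subgroup.lowerCentralSeries_succ]
      exact Subgroup.commutator_mem_commutator hx1 (Subgroup.mem_top h)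
    rw [hnil, Subgroup.mem_bot] at hmem
    exact (commutatorElement_eq_one_iff_mul_comm.mp hmem).symm
  · intro z hz
    by_contra hzc
    have h1 : conjClass z = z • (commutator G : Set G) := hcam.2 z hzc
    have h2 : conjClass z = {z} := conjClass_central hz
    have h3 : (commutator G : Set G) = {1} := by
      have h4 := h1.symm.trans h2
      have h5 : (commutator G : Set G) = z⁻¹ • ({z} : Set G) := by
        rw [← h4, inv_smul_smul]
      simp [h5]
    exact hcam.1 fun a b => commutatorElement_eq_one_iff_mul_comm.mp
      (by have : ⁅a, b⁆ ∈ (commutator G : Set G) :=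
            Subgroup.commutator_mem_commutator (Subgroup.mem_top a) (Subgroup.mem_top b)
          rwa [h3, Set.mem_singleton_iff] at this)

end Aux

/-- Lemmas 5.6 and 5.7. -/
theorem stmt16 (p n k : ℕ) (hp : p.Prime) {G : Type*} [Group G] [Fintype G]
    (hpg : IsPGroup p G) (hcam : IsCamina G)
    (hcard : Fintype.card G = p ^ n)
    (hnil : (⊤ : Subgroup G).lowerCentralSeries 2 = ⊥ ∧ (⊤ : Subgroup G).lowerCentralSeries 1 ≠ ⊥)
    (hZ : Nat.card (Subgroup.center G) = p ^ k) :
    ∃ σ : (G ⧸ Subgroup.center G) × (Subgroup.center G) ≃ G,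
      (∀ g ∈ Subgroup.center G,
        Matrix.of (fun a b => adjMat G (conjClass g) (σ a) (σ b)) =
          (1 : Matrix (G ⧸ Subgroup.center G) (G ⧸ Subgroup.center G) ℂ) ⊗ₖ
            (Matrix.of fun u v : Subgroup.center G =>
              if (v : G) * (u : G)⁻¹ = g then (1 : ℂ) else 0)) ∧
      (∀ g : G, g ∉ Subgroup.center G →
        Matrix.of (fun a b => adjMat G (conjClass g) (σ a) (σ b)) =
          (Matrix.of fun s t : G ⧸ Subgroup.center G =>
              if t * s⁻¹ = (QuotientGroup.mk g : G ⧸ Subgroup.center G) then (1 : ℂ) else 0) ⊗ₖ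
            (Matrix.of fun _ _ : Subgroup.center G => (1 : ℂ))) := by
  classical
  have hce : commutator G = Subgroup.center G := center_eq_commutator hcam hnil.1
  set Z := Subgroup.center G with hZdef
  have hmkZ : ∀ z : Z, (QuotientGroup.mk (z : G) : G ⧸ Z) = 1 := fun z =>
    (QuotientGroup.eq_one_iff _).mpr z.2
  let f : (G ⧸ Z) × Z → G := fun x => x.1.out * (x.2 : G)
  have hmkf : ∀ (s : G ⧸ Z) (z : Z), (QuotientGroup.mk (f (s, z)) : G ⧸ Z) = s := by
    intro s z
    show (QuotientGroup.mk (s.out * z) : G ⧸ Z) = s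
    rw [QuotientGroup.mk_mul, hmkZ, mul_one, QuotientGroup.out_eq']
  have hfbij : Function.Bijective f := by
    constructor
    · rintro ⟨s, z⟩ ⟨t, w⟩ h
      have hst : s = t := by rw [← hmkf s z, ← hmkf t w, h]
      have hzw : (z : G) = w := by
        have h' := h
        simp only [f, hst] at h'
        exact mul_left_cancel h'
      simp [hst, Subtype.ext hzw]
    · intro g
      refine ⟨⟨QuotientGroup.mk g, ⟨(QuotientGroup.mk g : G ⧸ Z).out⁻¹ * g, ?_⟩⟩, ?_⟩
      · rw [← QuotientGroup.eq_one_iff (N := Z)]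
        rw [QuotientGroup.mk_mul, QuotientGroup.mk_inv, QuotientGroup.out_eq']
        simp
      · show (QuotientGroup.mk g : G ⧸ Z).out * ((QuotientGroup.mk g : G ⧸ Z).out⁻¹ * g) = g
        group
  refine ⟨Equiv.ofBijective f hfbij, ?_, ?_⟩
  · intro g hg
    ext ⟨a1, a2⟩ ⟨b1, b2⟩
    simp only [Matrix.of_apply, adjMat, Matrix.kroneckerMap_apply, Matrix.one_apply,
      Equiv.ofBijective_apply, conjClass_central hg, Set.mem_singleton_iff]
    have key : f (b1, b2) * (f (a1, a2))⁻¹ = g ↔ a1 = b1 ∧ (b2 : G) * (a2 : G)⁻¹ = g := by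
      constructor
      · intro h
        have h1 : a1 = b1 := by
          have hq := congrArg (QuotientGroup.mk (s := Z)) h
          rw [QuotientGroup.mk_mul, QuotientGroup.mk_inv, hmkf _ _, hmkf _ _,
            (QuotientGroup.eq_one_iff g).mpr hg] at hq
          exact (mul_inv_eq_one.mp hq).symm
        refine ⟨h1, ?_⟩
        subst h1
        have h2 : a1.out * ((b2 : G) * (a2 : G)⁻¹) * a1.out⁻¹ = g := by
          rw [← h]; show _ = a1.out * b2 * (a1.out * a2)⁻¹
          group
        rw [← h2]
        have hc : (b2 : G) * (a2 : G)⁻¹ ∈ Z := mul_mem b2.2 (inv_mem a2.2)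
        rw [Subgroup.mem_center_iff.mp hc a1.out]
        group
      · rintro ⟨rfl, h2⟩
        show a1.out * b2 * (a1.out * a2)⁻¹ = g
        have hc : (b2 : G) * (a2 : G)⁻¹ ∈ Z := mul_mem b2.2 (inv_mem a2.2)
        calc a1.out * b2 * (a1.out * a2)⁻¹
            = a1.out * ((b2 : G) * (a2 : G)⁻¹) * a1.out⁻¹ := by group
          _ = ((b2 : G) * (a2 : G)⁻¹) * a1.out * a1.out⁻¹ := by
              rw [Subgroup.mem_center_iff.mp hc a1.out]
          _ = g := by rw [mul_assoc, mul_inv_cancel, mul_one, h2]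
    by_cases h : a1 = b1
    · subst h; simp [key]
    · simp [key, h]
  · intro g hg
    have hg' : g ∉ commutator G := by rw [hce]; exact hg
    have hcc : conjClass g = g • (Z : Set G) := by
      rw [← hce]; exact hcam.2 g hg'
    ext ⟨a1, a2⟩ ⟨b1, b2⟩
    simp only [Matrix.of_apply, adjMat, Matrix.kroneckerMap_apply, Equiv.ofBijective_apply, hcc,
      mul_one]
    have key : f (b1, b2) * (f (a1, a2))⁻¹ ∈ g • (Z : Set G) ↔
        b1 * a1⁻¹ = (QuotientGroup.mk g : G ⧸ Z) := by
      rw [Set.mem_smul_set_iff_inv_smul_mem, smul_eq_mul, SetLike.mem_coe,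
        ← QuotientGroup.eq (s := Z)]
      constructor
      · intro h
        rw [h, QuotientGroup.mk_mul, QuotientGroup.mk_inv, hmkf _ _, hmkf _ _]
      · intro h
        rw [QuotientGroup.mk_mul, QuotientGroup.mk_inv, hmkf _ _, hmkf _ _, h]
    rcases Classical.em (b1 * a1⁻¹ = (QuotientGroup.mk g : G ⧸ Z)) with h | h
    · simp [key, h]; rfl
    · simp [key, h]; exact h
end
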